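/- Let N be a left A-module, equip Hom_k(H, N) with the left A-module structure (a·φ)(x) = a₍₀₎·φ(S(a₍₁₎) x a₍₋₁₎), and equip Hom_k(H, Hom_k(H, N)) with the same construction applied to the A-module Hom_k(H, N). Define m : Hom_k(H, Hom_k(H, N)) → Hom_k(H, N) by m(Φ)(h) = Φ(h⁽¹⁾)(h⁽²⁾). Then: (i) m is A-linear; (ii) m satisfies the unit laws m(h ↦ ε(h)φ) = φ and m(h ↦ (x ↦ ε(x)φ(h))) = φ for all φ ∈ Hom_k(H, N); (iii) m is associative: for every k-linear Ψ : H → Hom_k(H, Hom_k(H, N)), m(h ↦ m(Ψ(h))) = m(h ↦ Ψ(h⁽¹⁾)(h⁽²⁾)), both sides being h ↦ Ψ(h⁽¹⁾)(h⁽²⁾)(h⁽³⁾). In particular N ↦ Hom_k(H, N), with this multiplication and the unit n ↦ (h ↦ ε(h)n), is a monad on left A-modules. -/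
import Mathlib


/-!
# Statement 9

`k` a field, `H` a Hopf algebra over `k` with antipode `S`, `A` an `H`-bicomodule algebra
(right coaction `ρ`, left coaction `λ = lco`, commuting), `N` a left `A`-module.  Equip
`X := Hom_k(H, N)` with the `A`-action `(a·φ)(x) = a₍₀₎ • φ(S(a₍₁₎) x a₍₋₁₎)` (`liftAct` below
applied to the scalar action of `A` on `N`) and `Hom_k(H, X)` with the same construction
applied to the `A`-module `X`.  Define `m(Φ)(h) = Φ(h⁽¹⁾)(h⁽²⁾)` (`Mmap` below).  Then
(i) `m` is `A`-linear; (ii) `m` satisfies the two unit laws; (iii) `m` is associative.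
In particular `N ↦ Hom_k(H, N)` with multiplication `m` and unit `n ↦ (h ↦ ε(h) n)` is a
monad on left `A`-modules.
-/

open TensorProduct

set_option synthInstance.maxHeartbeats 1000000
set_option maxHeartbeats 1600000
set_option maxRecDepth 8000

noncomputable section

variable (k : Type) [Field k]

/-- The curried action of a `k`-algebra `R` on a module `V`, as a `k`-bilinear map. -/
def csmul (R : Type) [Ring R] [Algebra k R] (V : Type) [AddCommGroup V] [Module k V]
    [Module R V] [IsScalarTower k R V] [SMulCommClass k R V] : R →ₗ[k] V →ₗ[k] V where
  toFun r :=
    { toFun := fun v => r • v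
      map_add' := smul_add r
      map_smul' := fun c v => (smul_comm c r v).symm }
  map_add' r r' := LinearMap.ext fun v => add_smul r r' v
  map_smul' c r := LinearMap.ext fun v => smul_assoc c r v

variable (H : Type) [Ring H] [HopfAlgebra k H]

/-- `H ⊗ H →ₗ End_k(H)`, `u ⊗ v ↦ (x ↦ u * x * v)`. -/
def sandwich : H ⊗[k] H →ₗ[k] (H →ₗ[k] H) :=
  (TensorProduct.lift (LinearMap.llcomp k H H H)) ∘ₗ
    (TensorProduct.map (LinearMap.mul k H) (LinearMap.mul k H).flip)

/-- `H ⊗ H →ₗ End_k(Hom_k(H, W))`, `u ⊗ v ↦ (φ ↦ (x ↦ φ (u * x * v)))`. -/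
def sandwichHom (W : Type) [AddCommGroup W] [Module k W] :
    H ⊗[k] H →ₗ[k] (H →ₗ[k] W) →ₗ[k] (H →ₗ[k] W) :=
  (LinearMap.llcomp k H H W).flip ∘ₗ sandwich k H

variable (A : Type) [Ring A] [Algebra k A]
variable (ρ : A →ₐ[k] A ⊗[k] H) (lco : A →ₐ[k] H ⊗[k] A)

/-- `A →ₗ A ⊗ (H ⊗ H)`, `a ↦ a₍₀₎ ⊗ (S(a₍₁₎) ⊗ a₍₋₁₎)`. -/
def deltaS : A →ₗ[k] A ⊗[k] (H ⊗[k] H) :=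
  (LinearMap.lTensor A (LinearMap.rTensor H (HopfAlgebra.antipode (R := k)))) ∘ₗ
    (LinearMap.lTensor A (TensorProduct.comm k H H).toLinearMap) ∘ₗ
    (TensorProduct.assoc k A H H).toLinearMap ∘ₗ
    (LinearMap.rTensor H (TensorProduct.comm k H A).toLinearMap) ∘ₗ
    (LinearMap.rTensor H lco.toLinearMap) ∘ₗ ρ.toLinearMap

/-- Given a curried action `ν : A →ₗ End_k(W)`, the induced action of `A` on `Hom_k(H, W)`:
`(a · φ)(x) = ν(a₍₀₎) (φ (S(a₍₁₎) * x * a₍₋₁₎))`. -/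
def liftAct (W : Type) [AddCommGroup W] [Module k W] (ν : A →ₗ[k] W →ₗ[k] W) :
    A →ₗ[k] (H →ₗ[k] W) →ₗ[k] (H →ₗ[k] W) :=
  (TensorProduct.lift
      (((LinearMap.llcomp k (H →ₗ[k] W) (H →ₗ[k] W) (H →ₗ[k] W)).comp
          ((LinearMap.llcomp k H W W) ∘ₗ ν)).compl₂ (sandwichHom k H W))) ∘ₗ
    deltaS k H A ρ lco

/-- Evaluation `Hom_k(H, W) ⊗ H →ₗ W`, `φ ⊗ h ↦ φ h`. -/
def evalMap (W : Type) [AddCommGroup W] [Module k W] :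
    (H →ₗ[k] W) ⊗[k] H →ₗ[k] W :=
  TensorProduct.lift LinearMap.id

/-- The monad multiplication `m : Hom_k(H, Hom_k(H, W)) →ₗ Hom_k(H, W)`,
`m(Φ)(h) = Φ(h⁽¹⁾)(h⁽²⁾)`. -/
def Mmap (W : Type) [AddCommGroup W] [Module k W] :
    (H →ₗ[k] (H →ₗ[k] W)) →ₗ[k] (H →ₗ[k] W) :=
  (LinearMap.lcomp k W (Coalgebra.comul (R := k) (A := H))) ∘ₗ
    (LinearMap.llcomp k (H ⊗[k] H) ((H →ₗ[k] W) ⊗[k] H) W (evalMap k H W)) ∘ₗ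
    (LinearMap.rTensorHom (M := H) (N := H) (P := H →ₗ[k] W))

/-- The monad unit `u : W →ₗ Hom_k(H, W)`, `u(w)(h) = ε(h) • w`. -/
def unitMap (W : Type) [AddCommGroup W] [Module k W] : W →ₗ[k] (H →ₗ[k] W) where
  toFun w := (Coalgebra.counit (R := k) (A := H)).smulRight w
  map_add' w w' := by ext x; simp
  map_smul' c w := by ext x; simp [smul_smul, mul_comm]


/-! ### Auxiliary lemmas -/

section Aux

variable {W : Type} [AddCommGroup W] [Module k W]

@[simp] lemma aux_sandwich_tmul (u v x : H) : sandwich k H (u ⊗ₜ[k] v) x = u * (x * v) := rfl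

@[simp] lemma aux_sandwichHom_apply (w : H ⊗[k] H) (φ : H →ₗ[k] W) :
    sandwichHom k H W w φ = φ ∘ₗ sandwich k H w := rfl

@[simp] lemma aux_evalMap_tmul (φ : H →ₗ[k] W) (h : H) : evalMap k H W (φ ⊗ₜ[k] h) = φ h := rfl

lemma aux_Mmap_apply (Φ : H →ₗ[k] (H →ₗ[k] W)) (h : H) :
    Mmap k H W Φ h = evalMap k H W (LinearMap.rTensor H Φ (Coalgebra.comul h)) := rfl

@[simp] lemma aux_unitMap_apply (w : W) (h : H) :
    unitMap k H W w h = Coalgebra.counit (R := k) h • w := rfl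

lemma aux_unit_law1 (φ : H →ₗ[k] W) : Mmap k H W (unitMap k H (H →ₗ[k] W) φ) = φ := by
  ext h
  rw [aux_Mmap_apply]
  have key : ∀ t : H ⊗[k] H,
      evalMap k H W (LinearMap.rTensor H (unitMap k H (H →ₗ[k] W) φ) t) =
      φ ((TensorProduct.lid k H) (LinearMap.rTensor H (Coalgebra.counit (R := k)) t)) := by
    intro t
    induction t using TensorProduct.induction_on with
    | zero => simp only [map_zero]
    | tmul x y => simp
    | add p q hp hq => simp [map_add, hp, hq]
  rw [key]
  have := LinearMap.congr_fun (Coalgebra.rTensor_counit_comp_comul (R := k) (A := H)) h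
  simp only [LinearMap.comp_apply] at this
  rw [this]
  simp

lemma aux_unit_law2 (φ : H →ₗ[k] W) : Mmap k H W (unitMap k H W ∘ₗ φ) = φ := by
  ext h
  rw [aux_Mmap_apply]
  have key : ∀ t : H ⊗[k] H,
      evalMap k H W (LinearMap.rTensor H (unitMap k H W ∘ₗ φ) t) =
      φ ((TensorProduct.rid k H) (LinearMap.lTensor H (Coalgebra.counit (R := k)) t)) := by
    intro t
    induction t using TensorProduct.induction_on with
    | zero => simp only [map_zero]
    | tmul x y => simp
    | add p q hp hq => simp [map_add, hp, hq]
  rw [key]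
  have := LinearMap.congr_fun (Coalgebra.lTensor_counit_comp_comul (R := k) (A := H)) h
  simp only [LinearMap.comp_apply] at this
  rw [this]
  simp

lemma aux_Mmap_assoc (Ψ : H →ₗ[k] (H →ₗ[k] (H →ₗ[k] W))) :
    Mmap k H W (Mmap k H W ∘ₗ Ψ) = Mmap k H W (Mmap k H (H →ₗ[k] W) Ψ) := by
  set F : H ⊗[k] H →ₗ[k] (H →ₗ[k] W) :=
    evalMap k H (H →ₗ[k] W) ∘ₗ LinearMap.rTensor H Ψ with hF
  set E₂ : (H ⊗[k] H) ⊗[k] H →ₗ[k] W := evalMap k H W ∘ₗ LinearMap.rTensor H F with hE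
  have hFt : ∀ (x y : H), F (x ⊗ₜ[k] y) = Ψ x y := by intro x y; simp [hF]
  have hEt : ∀ (s : H ⊗[k] H) (y : H),
      E₂ (s ⊗ₜ[k] y) = evalMap k H W (LinearMap.rTensor H F (s ⊗ₜ[k] y)) := by
    intro s y; simp [hE]
  have claimL : ∀ t : H ⊗[k] H,
      evalMap k H W (LinearMap.rTensor H (Mmap k H W ∘ₗ Ψ) t) =
      E₂ ((TensorProduct.assoc k H H H).symm
        (LinearMap.lTensor H (Coalgebra.comul (R := k)) t)) := by
    intro t
    induction t using TensorProduct.induction_on with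
    | zero => simp only [map_zero]
    | tmul x y =>
      simp only [LinearMap.rTensor_tmul, LinearMap.lTensor_tmul, LinearMap.comp_apply,
        aux_evalMap_tmul, aux_Mmap_apply]
      generalize Coalgebra.comul (R := k) y = s
      induction s using TensorProduct.induction_on with
      | zero => simp only [tmul_zero, map_zero]
      | tmul y1 y2 => simp [hE, hF]
      | add p q hp hq => simp only [map_add, tmul_add, hp, hq]
    | add p q hp hq => simp [map_add, hp, hq]
  have claimR : ∀ t : H ⊗[k] H,
      evalMap k H W (LinearMap.rTensor H (Mmap k H (H →ₗ[k] W) Ψ) t) =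
      E₂ (LinearMap.rTensor H (Coalgebra.comul (R := k)) t) := by
    intro t
    induction t using TensorProduct.induction_on with
    | zero => simp only [map_zero]
    | tmul x y =>
      simp only [LinearMap.rTensor_tmul, LinearMap.comp_apply, aux_evalMap_tmul,
        aux_Mmap_apply]
      generalize Coalgebra.comul (R := k) x = s
      induction s using TensorProduct.induction_on with
      | zero => simp only [zero_tmul, map_zero, LinearMap.zero_apply]
      | tmul x1 x2 => simp [hE, hF]
      | add p q hp hq =>
        simp only [map_add, add_tmul, hp, hq, LinearMap.add_apply]
    | add p q hp hq => simp [map_add, hp, hq]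
  ext h
  rw [aux_Mmap_apply, aux_Mmap_apply, claimL, claimR]
  have := LinearMap.congr_fun (Coalgebra.coassoc (R := k) (A := H)) h
  simp only [LinearMap.comp_apply, LinearEquiv.coe_coe] at this
  rw [← this]
  simp

section Conv

open Coalgebra HopfAlgebra

variable {B : Type} [Ring B] [Algebra k B]

/-- Convolution product on `Hom_k(H, B)`. -/
def auxConv (f g : H →ₗ[k] B) : H →ₗ[k] B :=
  LinearMap.mul' k B ∘ₗ TensorProduct.map f g ∘ₗ (Coalgebra.comul (R := k))

/-- Convolution unit. -/
def auxCunit : H →ₗ[k] B := Algebra.linearMap k B ∘ₗ Coalgebra.counit (R := k)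

lemma auxConv_apply (f g : H →ₗ[k] B) (h : H) :
    auxConv k H f g h = LinearMap.mul' k B (TensorProduct.map f g (Coalgebra.comul (R := k) h)) :=
  rfl

lemma auxConv_unit_left (f : H →ₗ[k] B) : auxConv k H (auxCunit k H) f = f := by
  ext h
  rw [auxConv_apply]
  have hm : TensorProduct.map (auxCunit k H (B := B)) f =
      TensorProduct.map (Algebra.linearMap k B) f ∘ₗ
        LinearMap.rTensor H (Coalgebra.counit (R := k)) := by
    ext x y
    simp [auxCunit]
  rw [hm]
  have := LinearMap.congr_fun (Coalgebra.rTensor_counit_comp_comul (R := k) (A := H)) h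
  simp only [LinearMap.comp_apply] at this ⊢
  rw [this]
  simp

lemma auxConv_unit_right (f : H →ₗ[k] B) : auxConv k H f (auxCunit k H) = f := by
  ext h
  rw [auxConv_apply]
  have hm : TensorProduct.map f (auxCunit k H (B := B)) =
      TensorProduct.map f (Algebra.linearMap k B) ∘ₗ
        LinearMap.lTensor H (Coalgebra.counit (R := k)) := by
    ext x y
    simp [auxCunit]
  rw [hm]
  have := LinearMap.congr_fun (Coalgebra.lTensor_counit_comp_comul (R := k) (A := H)) h
  simp only [LinearMap.comp_apply] at this ⊢
  rw [this]
  simp [Algebra.algebraMap_eq_smul_one, smul_comm]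

lemma auxConv_assoc (f g w : H →ₗ[k] B) :
    auxConv k H (auxConv k H f g) w = auxConv k H f (auxConv k H g w) := by
  set F₁ : (H ⊗[k] H) ⊗[k] H →ₗ[k] B :=
    LinearMap.mul' k B ∘ₗ TensorProduct.map (LinearMap.mul' k B ∘ₗ TensorProduct.map f g) w
    with hF₁
  set F₂ : H ⊗[k] (H ⊗[k] H) →ₗ[k] B :=
    LinearMap.mul' k B ∘ₗ TensorProduct.map f (LinearMap.mul' k B ∘ₗ TensorProduct.map g w)
    with hF₂
  have hass : F₂ ∘ₗ (TensorProduct.assoc k H H H).toLinearMap = F₁ := by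
    apply TensorProduct.ext_threefold
    intro x y z
    simp [hF₁, hF₂, mul_assoc]
  have c1 : ∀ t : H ⊗[k] H,
      LinearMap.mul' k B (TensorProduct.map (auxConv k H f g) w t) =
      F₁ (LinearMap.rTensor H (Coalgebra.comul (R := k)) t) := by
    intro t
    induction t using TensorProduct.induction_on with
    | zero => simp only [map_zero]
    | tmul x y => simp [hF₁, auxConv_apply]
    | add p q hp hq => simp only [map_add, hp, hq]
  have c2 : ∀ t : H ⊗[k] H,
      LinearMap.mul' k B (TensorProduct.map f (auxConv k H g w) t) =
      F₂ (LinearMap.lTensor H (Coalgebra.comul (R := k)) t) := by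
    intro t
    induction t using TensorProduct.induction_on with
    | zero => simp only [map_zero]
    | tmul x y => simp [hF₂, auxConv_apply]
    | add p q hp hq => simp only [map_add, hp, hq]
  ext h
  rw [auxConv_apply, auxConv_apply, c1, c2]
  have := LinearMap.congr_fun (Coalgebra.coassoc (R := k) (A := H)) h
  simp only [LinearMap.comp_apply, LinearEquiv.coe_coe] at this
  have h2 := LinearMap.congr_fun hass
    ((LinearMap.rTensor H (Coalgebra.comul (R := k))) (Coalgebra.comul (R := k) h))
  simp only [LinearMap.comp_apply, LinearEquiv.coe_coe] at h2
  rw [← this]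
  exact h2.symm

end Conv

section Antipode

open Coalgebra HopfAlgebra

local notation "Δ" => Coalgebra.comul (R := k) (A := H)
local notation "S" => HopfAlgebra.antipode (R := k) (A := H)

/-- `h ↦ S(h⁽²⁾) ⊗ S(h⁽¹⁾)`. -/
def auxGS : H →ₗ[k] H ⊗[k] H :=
  (TensorProduct.comm k H H).toLinearMap ∘ₗ
    TensorProduct.map (HopfAlgebra.antipode (R := k)) (HopfAlgebra.antipode (R := k)) ∘ₗ
    Coalgebra.comul (R := k)

/-- `Δ` has `Δ ∘ S` as a right convolution inverse. -/
lemma auxConvDelta :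
    auxConv k H (Coalgebra.comul (R := k) (A := H))
      (Coalgebra.comul (R := k) (A := H) ∘ₗ HopfAlgebra.antipode (R := k)) =
    auxCunit k H (B := H ⊗[k] H) := by
  ext h
  rw [auxConv_apply]
  have c1 : ∀ t : H ⊗[k] H,
      LinearMap.mul' k (H ⊗[k] H)
        (TensorProduct.map (Δ) ((Δ) ∘ₗ (S)) t) =
      (Δ) (LinearMap.mul' k H (LinearMap.lTensor H (S) t)) := by
    intro t
    induction t using TensorProduct.induction_on with
    | zero => simp only [map_zero]
    | tmul x y => simp
    | add p q hp hq => simp only [map_add, hp, hq]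
  rw [c1, HopfAlgebra.mul_antipode_lTensor_comul_apply]
  have : (Δ) (algebraMap k H (Coalgebra.counit (R := k) h)) =
      algebraMap k (H ⊗[k] H) (Coalgebra.counit (R := k) h) := by
    simpa using (Bialgebra.comulAlgHom k H).commutes (Coalgebra.counit (R := k) h)
  rw [this]
  rfl

/-- `Δ` has `auxGS` as a left convolution inverse. -/
lemma auxConvGS :
    auxConv k H (auxGS k H) (Coalgebra.comul (R := k) (A := H)) =
    auxCunit k H (B := H ⊗[k] H) := by
  set p : H ⊗[k] H →ₗ[k] H :=
    LinearMap.mul' k H ∘ₗ LinearMap.rTensor H (S) with hp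
  have hpt : ∀ x z : H, p (x ⊗ₜ[k] z) = (S) x * z := by intro x z; simp [hp]
  set M₂ : H ⊗[k] (H ⊗[k] H) →ₗ[k] H ⊗[k] H :=
    LinearMap.mul' k (H ⊗[k] H) ∘ₗ LinearMap.rTensor (H ⊗[k] H) (auxGS k H) with hM₂
  set K₄ : (H ⊗[k] H) ⊗[k] (H ⊗[k] H) →ₗ[k] H ⊗[k] H :=
    LinearMap.mul' k (H ⊗[k] H) ∘ₗ
      LinearMap.rTensor (H ⊗[k] H)
        ((TensorProduct.comm k H H).toLinearMap ∘ₗ TensorProduct.map (S) (S)) with hK₄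
  set K₆ : (H ⊗[k] (H ⊗[k] H)) ⊗[k] H →ₗ[k] H ⊗[k] H :=
    TensorProduct.map p p ∘ₗ (TensorProduct.assoc k (H ⊗[k] H) H H).toLinearMap ∘ₗ
      LinearMap.rTensor H (TensorProduct.comm k H (H ⊗[k] H)).toLinearMap with hK₆
  set K₇ : (H ⊗[k] H) ⊗[k] H →ₗ[k] H ⊗[k] H :=
    TensorProduct.map (Algebra.linearMap k H ∘ₗ Coalgebra.counit (R := k)) p ∘ₗ
      (TensorProduct.assoc k H H H).toLinearMap ∘ₗ
      LinearMap.rTensor H (TensorProduct.comm k H H).toLinearMap with hK₇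
  set K₈ : H ⊗[k] H →ₗ[k] H ⊗[k] H := (TensorProduct.mk k H H) 1 ∘ₗ p with hK₈
  ext h
  rw [auxConv_apply]
  have c1 : ∀ t : H ⊗[k] H,
      LinearMap.mul' k (H ⊗[k] H) (TensorProduct.map (auxGS k H) (Δ) t) =
      M₂ (LinearMap.lTensor H (Δ) t) := by
    intro t
    induction t using TensorProduct.induction_on with
    | zero => simp only [map_zero]
    | tmul x y => simp [hM₂]
    | add a b ha hb => simp only [map_add, ha, hb]
  rw [c1]
  have hco1 := LinearMap.congr_fun (Coalgebra.coassoc (R := k) (A := H)) h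
  simp only [LinearMap.comp_apply, LinearEquiv.coe_coe] at hco1
  rw [← hco1]
  have c2 : ∀ t : (H ⊗[k] H) ⊗[k] H,
      M₂ ((TensorProduct.assoc k H H H) t) =
      K₄ ((TensorProduct.assoc k (H ⊗[k] H) H H)
        (LinearMap.rTensor H (LinearMap.rTensor H (Δ)) t)) := by
    intro t
    induction t using TensorProduct.induction_on with
    | zero => simp only [map_zero]
    | tmul u c =>
      induction u using TensorProduct.induction_on with
      | zero => simp only [zero_tmul, map_zero]
      | tmul a b => simp [hM₂, hK₄, auxGS]
      | add a b ha hb => simp only [add_tmul, map_add, ha, hb]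
    | add a b ha hb => simp only [map_add, ha, hb]
  rw [c2]
  have hcoM : LinearMap.rTensor H (Δ) ∘ₗ (Δ) =
      (TensorProduct.assoc k H H H).symm.toLinearMap ∘ₗ
        (LinearMap.lTensor H (Δ) ∘ₗ (Δ)) := by
    rw [← Coalgebra.coassoc]
    apply LinearMap.ext
    intro x
    simp
  have e1 : LinearMap.rTensor H (LinearMap.rTensor H (Δ))
        (LinearMap.rTensor H (Δ) (Δ h)) =
      LinearMap.rTensor H (TensorProduct.assoc k H H H).symm.toLinearMap
        (LinearMap.rTensor H (LinearMap.lTensor H (Δ)) (LinearMap.rTensor H (Δ) (Δ h))) := by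
    have e2 : LinearMap.rTensor H (LinearMap.rTensor H (Δ) ∘ₗ (Δ)) (Δ h) =
        LinearMap.rTensor H ((TensorProduct.assoc k H H H).symm.toLinearMap ∘ₗ
          (LinearMap.lTensor H (Δ) ∘ₗ (Δ))) (Δ h) := by rw [hcoM]
    simp only [LinearMap.rTensor_comp, LinearMap.comp_apply] at e2
    exact e2
  rw [e1]
  have c3 : ∀ s : (H ⊗[k] (H ⊗[k] H)) ⊗[k] H,
      K₄ ((TensorProduct.assoc k (H ⊗[k] H) H H)
        (LinearMap.rTensor H (TensorProduct.assoc k H H H).symm.toLinearMap s)) = K₆ s := by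
    intro s
    induction s using TensorProduct.induction_on with
    | zero => simp only [map_zero]
    | tmul u z =>
      induction u using TensorProduct.induction_on with
      | zero => simp only [zero_tmul, map_zero]
      | tmul x m =>
        induction m using TensorProduct.induction_on with
        | zero => simp only [tmul_zero, zero_tmul, map_zero]
        | tmul y1 y2 => simp [hK₄, hK₆, hp, mul_comm]
        | add a b ha hb => simp only [tmul_add, add_tmul, map_add, ha, hb]
      | add a b ha hb => simp only [add_tmul, map_add, ha, hb]
    | add a b ha hb => simp only [map_add, ha, hb]
  rw [c3]
  have c4 : ∀ t : (H ⊗[k] H) ⊗[k] H,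
      K₆ (LinearMap.rTensor H (LinearMap.lTensor H (Δ)) t) = K₇ t := by
    intro t
    induction t using TensorProduct.induction_on with
    | zero => simp only [map_zero]
    | tmul u z =>
      induction u using TensorProduct.induction_on with
      | zero => simp only [zero_tmul, map_zero]
      | tmul x y =>
        simp [hK₆, hK₇, hp]
      | add a b ha hb => simp only [add_tmul, map_add, ha, hb]
    | add a b ha hb => simp only [map_add, ha, hb]
  rw [c4]
  have c5 : ∀ t : H ⊗[k] H, K₇ (LinearMap.rTensor H (Δ) t) = K₈ t := by
    intro t
    induction t using TensorProduct.induction_on with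
    | zero => simp only [map_zero]
    | tmul x z =>
      have c5a : ∀ s : H ⊗[k] H, K₇ (s ⊗ₜ[k] z) =
          (TensorProduct.mk k H H) 1
            ((S) ((TensorProduct.rid k H) (LinearMap.lTensor H (Coalgebra.counit (R := k)) s))
              * z) := by
        intro s
        induction s using TensorProduct.induction_on with
        | zero => simp only [zero_tmul, map_zero, LinearMap.map_zero]; simp
        | tmul x1 x2 =>
          simp only [hK₇, hp, LinearMap.comp_apply, LinearEquiv.coe_coe,
            LinearMap.rTensor_tmul, LinearMap.lTensor_tmul, TensorProduct.comm_tmul,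
            TensorProduct.assoc_tmul,
            TensorProduct.map_tmul, Algebra.linearMap_apply, LinearMap.mul'_apply,
            TensorProduct.rid_tmul, TensorProduct.mk_apply, LinearMap.map_smul,
            smul_mul_assoc, tmul_smul, smul_tmul', Algebra.algebraMap_eq_smul_one]
        | add a b ha hb =>
          simp only [add_tmul, map_add, ha, hb, LinearMap.map_add, mul_comm]
          simp [add_mul, tmul_add]
      rw [LinearMap.rTensor_tmul, c5a]
      have := LinearMap.congr_fun (Coalgebra.lTensor_counit_comp_comul (R := k) (A := H)) x
      simp only [LinearMap.comp_apply] at this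
      rw [this]
      simp only [hK₈, LinearMap.comp_apply, LinearMap.flip_apply, TensorProduct.mk_apply,
        TensorProduct.rid_tmul, one_smul, hp, LinearMap.rTensor_tmul, LinearMap.mul'_apply]
    | add a b ha hb => simp only [map_add, ha, hb]
  rw [c5]
  have : K₈ (Δ h) = (TensorProduct.mk k H H) 1 (algebraMap k H (Coalgebra.counit (R := k) h)) := by
    simp [hK₈, hp]
  rw [this]
  simp only [auxCunit, LinearMap.comp_apply, Algebra.linearMap_apply,
    Algebra.TensorProduct.algebraMap_apply, Algebra.algebraMap_eq_smul_one,
    TensorProduct.mk_apply, tmul_smul, smul_tmul']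
  rw [Algebra.TensorProduct.one_def, smul_tmul']

/-- The antipode is an anti-coalgebra morphism: `Δ(S h) = S(h⁽²⁾) ⊗ S(h⁽¹⁾)`. -/
lemma aux_antipode_comul :
    Coalgebra.comul (R := k) (A := H) ∘ₗ HopfAlgebra.antipode (R := k) = auxGS k H := by
  calc Coalgebra.comul (R := k) (A := H) ∘ₗ HopfAlgebra.antipode (R := k)
      = auxConv k H (auxCunit k H) ((Δ) ∘ₗ (S)) := (auxConv_unit_left k H _).symm
    _ = auxConv k H (auxConv k H (auxGS k H) (Δ)) ((Δ) ∘ₗ (S)) := by rw [auxConvGS]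
    _ = auxConv k H (auxGS k H) (auxConv k H (Δ) ((Δ) ∘ₗ (S))) := auxConv_assoc k H _ _ _
    _ = auxConv k H (auxGS k H) (auxCunit k H) := by rw [auxConvDelta]
    _ = auxGS k H := auxConv_unit_right k H _

lemma aux_antipode_comul_apply (x : H) :
    Coalgebra.comul (R := k) (HopfAlgebra.antipode (R := k) x) =
      (TensorProduct.comm k H H)
        (TensorProduct.map (HopfAlgebra.antipode (R := k)) (HopfAlgebra.antipode (R := k))
          (Coalgebra.comul (R := k) x)) := by
  have := LinearMap.congr_fun (aux_antipode_comul k H) x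
  simpa [auxGS] using this

end Antipode

section MainAct

variable {W : Type} [AddCommGroup W] [Module k W]

/-- The lift part of `liftAct`, before composing with `deltaS`. -/
def auxAct (ν : A →ₗ[k] W →ₗ[k] W) :
    A ⊗[k] (H ⊗[k] H) →ₗ[k] (H →ₗ[k] W) →ₗ[k] (H →ₗ[k] W) :=
  TensorProduct.lift
      (((LinearMap.llcomp k (H →ₗ[k] W) (H →ₗ[k] W) (H →ₗ[k] W)).comp
          ((LinearMap.llcomp k H W W) ∘ₗ ν)).compl₂ (sandwichHom k H W))

lemma aux_liftAct_eq (ν : A →ₗ[k] W →ₗ[k] W) :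
    liftAct k H A ρ lco W ν = auxAct k H A ν ∘ₗ deltaS k H A ρ lco := rfl

@[simp] lemma aux_auxAct_tmul (ν : A →ₗ[k] W →ₗ[k] W) (a : A) (w : H ⊗[k] H)
    (φ : H →ₗ[k] W) :
    auxAct k H A ν (a ⊗ₜ[k] w) φ = ν a ∘ₗ φ ∘ₗ sandwich k H w := rfl

/-- The evaluation map used on both sides of `A`-linearity of `Mmap`. -/
def auxG (ν : A →ₗ[k] W →ₗ[k] W) :
    A ⊗[k] ((H ⊗[k] H) ⊗[k] (H ⊗[k] H)) →ₗ[k]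
      (H →ₗ[k] (H →ₗ[k] W)) →ₗ[k] (H →ₗ[k] W) :=
  TensorProduct.lift (LinearMap.mk₂ k
    (fun a q => LinearMap.llcomp k H W W (ν a) ∘ₗ
      TensorProduct.lift (LinearMap.mk₂ k
        (fun w' w => Mmap k H W ∘ₗ
          (LinearMap.llcomp k H (H →ₗ[k] W) (H →ₗ[k] W) (sandwichHom k H W w')) ∘ₗ
          sandwichHom k H (H →ₗ[k] W) w)
        (fun m₁ m₂ n => by simp only [map_add, LinearMap.add_comp, LinearMap.comp_add])
        (fun c m n => by simp only [map_smul, LinearMap.smul_comp, LinearMap.comp_smul])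
        (fun m n₁ n₂ => by simp only [map_add, LinearMap.add_comp, LinearMap.comp_add])
        (fun c m n => by simp only [map_smul, LinearMap.smul_comp, LinearMap.comp_smul])) q)
    (fun a₁ a₂ q => by simp only [map_add, LinearMap.add_comp, LinearMap.comp_add])
    (fun c a q => by simp only [map_smul, LinearMap.smul_comp, LinearMap.comp_smul])
    (fun a q₁ q₂ => by simp only [map_add, LinearMap.add_comp, LinearMap.comp_add])
    (fun c a q => by simp only [map_smul, LinearMap.smul_comp, LinearMap.comp_smul]))

@[simp] lemma aux_auxG_tmul (ν : A →ₗ[k] W →ₗ[k] W) (a : A) (w' w : H ⊗[k] H)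
    (Φ : H →ₗ[k] (H →ₗ[k] W)) :
    auxG k H A ν (a ⊗ₜ[k] (w' ⊗ₜ[k] w)) Φ =
      ν a ∘ₗ Mmap k H W (sandwichHom k H W w' ∘ₗ Φ ∘ₗ sandwich k H w) := rfl

/-- `deltaS` applied to the `A`-leg. -/
def auxInner : A ⊗[k] (H ⊗[k] H) →ₗ[k] A ⊗[k] ((H ⊗[k] H) ⊗[k] (H ⊗[k] H)) :=
  (TensorProduct.assoc k A (H ⊗[k] H) (H ⊗[k] H)).toLinearMap ∘ₗ
    LinearMap.rTensor (H ⊗[k] H) (deltaS k H A ρ lco)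

/-- Comultiplication of `H ⊗ H`. -/
def auxDelta2 : H ⊗[k] H →ₗ[k] (H ⊗[k] H) ⊗[k] (H ⊗[k] H) :=
  (TensorProduct.tensorTensorTensorComm k H H H H).toLinearMap ∘ₗ
    TensorProduct.map (Coalgebra.comul (R := k)) (Coalgebra.comul (R := k))

/-- The flipped comultiplication of `H ⊗ H` applied to the `H ⊗ H`-leg. -/
def auxOuter : A ⊗[k] (H ⊗[k] H) →ₗ[k] A ⊗[k] ((H ⊗[k] H) ⊗[k] (H ⊗[k] H)) :=
  LinearMap.lTensor A
    ((TensorProduct.comm k (H ⊗[k] H) (H ⊗[k] H)).toLinearMap ∘ₗ auxDelta2 k H)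

lemma aux_CLHS (ν : A →ₗ[k] W →ₗ[k] W) (t : A ⊗[k] (H ⊗[k] H))
    (Φ : H →ₗ[k] (H →ₗ[k] W)) :
    Mmap k H W (auxAct k H A (liftAct k H A ρ lco W ν) t Φ) =
      auxG k H A ν (auxInner k H A ρ lco t) Φ := by
  induction t using TensorProduct.induction_on with
  | zero => simp only [map_zero, LinearMap.zero_apply]
  | add a b ha hb => simp only [map_add, LinearMap.add_apply, ha, hb]
  | tmul a w =>
    rw [aux_auxAct_tmul, aux_liftAct_eq k H A ρ lco ν]
    simp only [auxInner, LinearMap.comp_apply, LinearEquiv.coe_coe, LinearMap.rTensor_tmul]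
    generalize deltaS k H A ρ lco a = d
    induction d using TensorProduct.induction_on with
    | zero => simp only [map_zero, zero_tmul, LinearMap.zero_comp, LinearMap.zero_apply]
    | add a b ha hb =>
      simp only [map_add, add_tmul, LinearMap.add_comp, LinearMap.add_apply, ha, hb]
    | tmul a' w' =>
      ext h
      simp only [aux_Mmap_apply, TensorProduct.assoc_tmul, aux_auxG_tmul,
        LinearMap.comp_apply]
      generalize Coalgebra.comul (R := k) h = s
      induction s using TensorProduct.induction_on with
      | zero => simp only [map_zero]
      | add p q hp hq => simp only [map_add, hp, hq]
      | tmul x y => simp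

lemma aux_CRHS (ν : A →ₗ[k] W →ₗ[k] W) (t : A ⊗[k] (H ⊗[k] H)) (Φ : H →ₗ[k] (H →ₗ[k] W)) :
    auxAct k H A ν t (Mmap k H W Φ) = auxG k H A ν (auxOuter k H A t) Φ := by
  induction t using TensorProduct.induction_on with
  | zero => simp only [map_zero, LinearMap.zero_apply]
  | add a b ha hb => simp only [map_add, LinearMap.add_apply, ha, hb]
  | tmul a w =>
    rw [aux_auxAct_tmul]
    simp only [auxOuter, LinearMap.lTensor_tmul, LinearMap.comp_apply, LinearEquiv.coe_coe]
    ext h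
    induction w using TensorProduct.induction_on with
    | zero => simp only [map_zero, tmul_zero, LinearMap.zero_apply, LinearMap.comp_apply]
    | add p q hp hq =>
      simp only [LinearMap.comp_apply] at hp hq
      simp only [map_add, tmul_add, LinearMap.add_apply, LinearMap.comp_apply, hp, hq]
    | tmul u v =>
      simp only [LinearMap.comp_apply, aux_sandwich_tmul, aux_Mmap_apply, auxDelta2,
        LinearEquiv.coe_coe, TensorProduct.map_tmul, Bialgebra.comul_mul]
      generalize Coalgebra.comul (R := k) u = pu
      generalize Coalgebra.comul (R := k) v = pv
      induction pu using TensorProduct.induction_on with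
      | zero => simp only [zero_mul, map_zero, zero_tmul, tmul_zero, LinearMap.zero_apply]
      | add p q hp hq =>
        simp only [add_mul, map_add, add_tmul, tmul_add, hp, hq, LinearMap.add_apply]
      | tmul u1 u2 =>
        induction pv using TensorProduct.induction_on with
        | zero => simp only [mul_zero, map_zero, tmul_zero, zero_tmul, LinearMap.zero_apply]
        | add p q hp hq =>
          simp only [mul_add, map_add, tmul_add, add_tmul, hp, hq, LinearMap.add_apply]
        | tmul v1 v2 =>
          simp only [TensorProduct.tensorTensorTensorComm_tmul, TensorProduct.comm_tmul,
            aux_auxG_tmul, LinearMap.comp_apply, aux_Mmap_apply]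
          generalize Coalgebra.comul (R := k) h = s
          induction s using TensorProduct.induction_on with
          | zero => simp only [map_zero, mul_zero, zero_mul]
          | add p q hp hq => simp only [map_add, mul_add, add_mul, hp, hq]
          | tmul x y => simp [Algebra.TensorProduct.tmul_mul_tmul, mul_assoc]

end MainAct

section Crux

/-- `a ↦ a₍₋₁₎ ⊗ a₍₀₎ ⊗ a₍₁₎`. -/
def auxE : A →ₗ[k] (H ⊗[k] A) ⊗[k] H :=
  LinearMap.rTensor H lco.toLinearMap ∘ₗ ρ.toLinearMap

lemma aux_auxE_def : auxE k H A ρ lco = LinearMap.rTensor H lco.toLinearMap ∘ₗ ρ.toLinearMap :=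
  rfl

/-- The permutation-plus-antipode tail of `deltaS`, with general middle module. -/
def auxPTail (M : Type) [AddCommGroup M] [Module k M] :
    (H ⊗[k] M) ⊗[k] H →ₗ[k] M ⊗[k] (H ⊗[k] H) :=
  (LinearMap.lTensor M (LinearMap.rTensor H (HopfAlgebra.antipode (R := k)))) ∘ₗ
    (LinearMap.lTensor M (TensorProduct.comm k H H).toLinearMap) ∘ₗ
    (TensorProduct.assoc k M H H).toLinearMap ∘ₗ
    (LinearMap.rTensor H (TensorProduct.comm k H M).toLinearMap)

@[simp] lemma aux_auxPTail_tmul (M : Type) [AddCommGroup M] [Module k M]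
    (x : H) (m : M) (y : H) :
    auxPTail k H M ((x ⊗ₜ[k] m) ⊗ₜ[k] y) =
      m ⊗ₜ[k] (HopfAlgebra.antipode (R := k) y ⊗ₜ[k] x) := by
  simp [auxPTail]

lemma aux_deltaS_eq : deltaS k H A ρ lco = auxPTail k H A ∘ₗ auxE k H A ρ lco := rfl

/-- Applying `auxPTail` twice. -/
def auxP2 : (H ⊗[k] ((H ⊗[k] A) ⊗[k] H)) ⊗[k] H →ₗ[k]
    A ⊗[k] ((H ⊗[k] H) ⊗[k] (H ⊗[k] H)) :=
  (TensorProduct.assoc k A (H ⊗[k] H) (H ⊗[k] H)).toLinearMap ∘ₗ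
    auxPTail k H (A ⊗[k] (H ⊗[k] H)) ∘ₗ
    LinearMap.rTensor H (LinearMap.lTensor H (auxPTail k H A))

lemma aux_L1 (t : (H ⊗[k] A) ⊗[k] H) :
    (TensorProduct.assoc k A (H ⊗[k] H) (H ⊗[k] H))
        (LinearMap.rTensor (H ⊗[k] H) (deltaS k H A ρ lco) (auxPTail k H A t)) =
      auxP2 k H A (LinearMap.rTensor H (LinearMap.lTensor H (auxE k H A ρ lco)) t) := by
  induction t using TensorProduct.induction_on with
  | zero => simp only [map_zero]
  | add p q hp hq => simp only [map_add, hp, hq]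
  | tmul u y =>
    induction u using TensorProduct.induction_on with
    | zero => simp only [zero_tmul, map_zero]
    | add p q hp hq => simp only [add_tmul, map_add, hp, hq]
    | tmul x a =>
      simp only [aux_auxPTail_tmul, LinearMap.rTensor_tmul, LinearMap.lTensor_tmul,
        aux_deltaS_eq, LinearMap.comp_apply, auxP2, LinearEquiv.coe_coe]

/-- The pure coassociativity rearrangement map. -/
def auxXi : (H ⊗[k] A) ⊗[k] H →ₗ[k] (H ⊗[k] ((H ⊗[k] A) ⊗[k] H)) ⊗[k] H :=
  LinearMap.rTensor H (TensorProduct.assoc k H (H ⊗[k] A) H).toLinearMap ∘ₗ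
    (TensorProduct.assoc k (H ⊗[k] (H ⊗[k] A)) H H).symm.toLinearMap ∘ₗ
    LinearMap.lTensor (H ⊗[k] (H ⊗[k] A)) (Coalgebra.comul (R := k)) ∘ₗ
    LinearMap.rTensor H (TensorProduct.assoc k H H A).toLinearMap ∘ₗ
    LinearMap.rTensor H (LinearMap.rTensor A (Coalgebra.comul (R := k)))

lemma aux_N1
    (hρ_coassoc : (LinearMap.rTensor H ρ.toLinearMap) ∘ₗ ρ.toLinearMap =
      (TensorProduct.assoc k A H H).symm.toLinearMap ∘ₗ
        (LinearMap.lTensor A Coalgebra.comul) ∘ₗ ρ.toLinearMap)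
    (hlco_coassoc : (LinearMap.lTensor H lco.toLinearMap) ∘ₗ lco.toLinearMap =
      (TensorProduct.assoc k H H A).toLinearMap ∘ₗ
        (LinearMap.rTensor A Coalgebra.comul) ∘ₗ lco.toLinearMap)
    (hcommute : (TensorProduct.assoc k H A H).toLinearMap ∘ₗ
        (LinearMap.rTensor H lco.toLinearMap) ∘ₗ ρ.toLinearMap =
      (LinearMap.lTensor H ρ.toLinearMap) ∘ₗ lco.toLinearMap)
    (a : A) :
    LinearMap.rTensor H (LinearMap.lTensor H (auxE k H A ρ lco)) (auxE k H A ρ lco a) =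
      auxXi k H A (auxE k H A ρ lco a) := by
  -- small map-level facts
  have m_h2 : LinearMap.lTensor H (auxE k H A ρ lco) ∘ₗ lco.toLinearMap =
      LinearMap.lTensor H (LinearMap.rTensor H lco.toLinearMap) ∘ₗ
        ((TensorProduct.assoc k H A H).toLinearMap ∘ₗ
          (LinearMap.rTensor H lco.toLinearMap ∘ₗ ρ.toLinearMap)) := by
    rw [aux_auxE_def, LinearMap.lTensor_comp, LinearMap.comp_assoc, ← hcommute]
  have n1 : LinearMap.rTensor H (LinearMap.rTensor H lco.toLinearMap) ∘ₗ
      (TensorProduct.assoc k A H H).symm.toLinearMap =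
      (TensorProduct.assoc k (H ⊗[k] A) H H).symm.toLinearMap ∘ₗ
        LinearMap.rTensor (H ⊗[k] H) lco.toLinearMap := by
    apply TensorProduct.ext'
    intro a' m
    induction m using TensorProduct.induction_on with
    | zero => simp only [tmul_zero, map_zero]
    | add p q hp hq => simp only [tmul_add, map_add, hp, hq]
    | tmul y z => simp
  have n2 : LinearMap.lTensor H (LinearMap.rTensor H lco.toLinearMap) ∘ₗ
      (TensorProduct.assoc k H A H).toLinearMap =
      (TensorProduct.assoc k H (H ⊗[k] A) H).toLinearMap ∘ₗ
        LinearMap.rTensor H (LinearMap.lTensor H lco.toLinearMap) := by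
    apply TensorProduct.ext_threefold
    intro x a' y
    simp
  have n3 : LinearMap.rTensor H (LinearMap.rTensor H (LinearMap.lTensor H lco.toLinearMap)) ∘ₗ
      (TensorProduct.assoc k (H ⊗[k] A) H H).symm.toLinearMap =
      (TensorProduct.assoc k (H ⊗[k] (H ⊗[k] A)) H H).symm.toLinearMap ∘ₗ
        LinearMap.rTensor (H ⊗[k] H) (LinearMap.lTensor H lco.toLinearMap) := by
    apply TensorProduct.ext'
    intro u m
    induction m using TensorProduct.induction_on with
    | zero => simp only [tmul_zero, map_zero]
    | add p q hp hq => simp only [tmul_add, map_add, hp, hq]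
    | tmul y z => simp
  have sw1 : LinearMap.rTensor (H ⊗[k] H) lco.toLinearMap ∘ₗ
      LinearMap.lTensor A (Coalgebra.comul (R := k)) =
      LinearMap.lTensor (H ⊗[k] A) (Coalgebra.comul (R := k)) ∘ₗ
        LinearMap.rTensor H lco.toLinearMap := by
    rw [LinearMap.rTensor_comp_lTensor, LinearMap.lTensor_comp_rTensor]
  have sw2 : LinearMap.rTensor (H ⊗[k] H) (LinearMap.lTensor H lco.toLinearMap) ∘ₗ
      LinearMap.lTensor (H ⊗[k] A) (Coalgebra.comul (R := k)) =
      LinearMap.lTensor (H ⊗[k] (H ⊗[k] A)) (Coalgebra.comul (R := k)) ∘ₗ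
        LinearMap.rTensor H (LinearMap.lTensor H lco.toLinearMap) := by
    rw [LinearMap.rTensor_comp_lTensor, LinearMap.lTensor_comp_rTensor]
  have m_n2r : LinearMap.rTensor H (LinearMap.lTensor H (LinearMap.rTensor H lco.toLinearMap)) ∘ₗ
      LinearMap.rTensor H (TensorProduct.assoc k H A H).toLinearMap =
      LinearMap.rTensor H (TensorProduct.assoc k H (H ⊗[k] A) H).toLinearMap ∘ₗ
        LinearMap.rTensor H (LinearMap.rTensor H (LinearMap.lTensor H lco.toLinearMap)) := by
    rw [← LinearMap.rTensor_comp, n2, LinearMap.rTensor_comp]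
  -- now the element chase
  have step1 : LinearMap.rTensor H (LinearMap.lTensor H (auxE k H A ρ lco))
        (auxE k H A ρ lco a) =
      LinearMap.rTensor H (LinearMap.lTensor H (LinearMap.rTensor H lco.toLinearMap))
        (LinearMap.rTensor H (TensorProduct.assoc k H A H).toLinearMap
          (LinearMap.rTensor H (LinearMap.rTensor H lco.toLinearMap)
            (LinearMap.rTensor H ρ.toLinearMap (ρ.toLinearMap a)))) := by
    conv_lhs => rw [show auxE k H A ρ lco a =
      LinearMap.rTensor H lco.toLinearMap (ρ.toLinearMap a) from rfl]
    rw [← LinearMap.rTensor_comp_apply, m_h2]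
    simp only [LinearMap.rTensor_comp, LinearMap.comp_apply]
  rw [step1]
  have step2 : LinearMap.rTensor H ρ.toLinearMap (ρ.toLinearMap a) =
      (TensorProduct.assoc k A H H).symm
        (LinearMap.lTensor A (Coalgebra.comul (R := k)) (ρ.toLinearMap a)) := by
    have := LinearMap.congr_fun hρ_coassoc a
    simpa only [LinearMap.comp_apply, LinearEquiv.coe_coe] using this
  rw [step2]
  have step3 : LinearMap.rTensor H (LinearMap.rTensor H lco.toLinearMap)
        ((TensorProduct.assoc k A H H).symm
          (LinearMap.lTensor A (Coalgebra.comul (R := k)) (ρ.toLinearMap a))) =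
      (TensorProduct.assoc k (H ⊗[k] A) H H).symm
        (LinearMap.lTensor (H ⊗[k] A) (Coalgebra.comul (R := k))
          (auxE k H A ρ lco a)) := by
    have h1 := LinearMap.congr_fun n1
      (LinearMap.lTensor A (Coalgebra.comul (R := k)) (ρ.toLinearMap a))
    simp only [LinearMap.comp_apply, LinearEquiv.coe_coe] at h1
    rw [h1]
    have h2 := LinearMap.congr_fun sw1 (ρ.toLinearMap a)
    simp only [LinearMap.comp_apply] at h2
    rw [h2, aux_auxE_def]
    rfl
  rw [step3]
  have step4 : LinearMap.rTensor H (LinearMap.lTensor H (LinearMap.rTensor H lco.toLinearMap))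
        (LinearMap.rTensor H (TensorProduct.assoc k H A H).toLinearMap
          ((TensorProduct.assoc k (H ⊗[k] A) H H).symm
            (LinearMap.lTensor (H ⊗[k] A) (Coalgebra.comul (R := k))
              (auxE k H A ρ lco a)))) =
      LinearMap.rTensor H (TensorProduct.assoc k H (H ⊗[k] A) H).toLinearMap
        (LinearMap.rTensor H (LinearMap.rTensor H (LinearMap.lTensor H lco.toLinearMap))
          ((TensorProduct.assoc k (H ⊗[k] A) H H).symm
            (LinearMap.lTensor (H ⊗[k] A) (Coalgebra.comul (R := k))
              (auxE k H A ρ lco a)))) := by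
    have := LinearMap.congr_fun m_n2r
      ((TensorProduct.assoc k (H ⊗[k] A) H H).symm
        (LinearMap.lTensor (H ⊗[k] A) (Coalgebra.comul (R := k)) (auxE k H A ρ lco a)))
    simpa only [LinearMap.comp_apply] using this
  rw [step4]
  have step5 : LinearMap.rTensor H (LinearMap.rTensor H (LinearMap.lTensor H lco.toLinearMap))
        ((TensorProduct.assoc k (H ⊗[k] A) H H).symm
          (LinearMap.lTensor (H ⊗[k] A) (Coalgebra.comul (R := k)) (auxE k H A ρ lco a))) =
      (TensorProduct.assoc k (H ⊗[k] (H ⊗[k] A)) H H).symm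
        (LinearMap.lTensor (H ⊗[k] (H ⊗[k] A)) (Coalgebra.comul (R := k))
          (LinearMap.rTensor H (LinearMap.lTensor H lco.toLinearMap)
            (auxE k H A ρ lco a))) := by
    have h1 := LinearMap.congr_fun n3
      (LinearMap.lTensor (H ⊗[k] A) (Coalgebra.comul (R := k)) (auxE k H A ρ lco a))
    simp only [LinearMap.comp_apply, LinearEquiv.coe_coe] at h1
    rw [h1]
    have h2 := LinearMap.congr_fun sw2 (auxE k H A ρ lco a)
    simp only [LinearMap.comp_apply] at h2
    rw [h2]
  rw [step5]
  have step6 : LinearMap.rTensor H (LinearMap.lTensor H lco.toLinearMap)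
        (auxE k H A ρ lco a) =
      LinearMap.rTensor H (TensorProduct.assoc k H H A).toLinearMap
        (LinearMap.rTensor H (LinearMap.rTensor A (Coalgebra.comul (R := k)))
          (auxE k H A ρ lco a)) := by
    rw [aux_auxE_def]
    simp only [LinearMap.comp_apply]
    rw [← LinearMap.rTensor_comp_apply, hlco_coassoc]
    simp only [LinearMap.rTensor_comp, LinearMap.comp_apply]
  rw [step6]
  simp only [auxXi, LinearMap.comp_apply, LinearEquiv.coe_coe, ← LinearMap.rTensor_comp_apply]

lemma aux_L2 (t : (H ⊗[k] A) ⊗[k] H) :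
    auxP2 k H A (auxXi k H A t) =
      LinearMap.lTensor A
          ((TensorProduct.comm k (H ⊗[k] H) (H ⊗[k] H)).toLinearMap ∘ₗ auxDelta2 k H)
        (auxPTail k H A t) := by
  induction t using TensorProduct.induction_on with
  | zero => simp only [map_zero]
  | add p q hp hq => simp only [map_add, hp, hq]
  | tmul u y =>
    induction u using TensorProduct.induction_on with
    | zero => simp only [zero_tmul, map_zero]
    | add p q hp hq => simp only [add_tmul, map_add, hp, hq]
    | tmul x a =>
      simp only [auxXi, auxDelta2, LinearMap.comp_apply, LinearEquiv.coe_coe,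
        LinearMap.rTensor_tmul, LinearMap.lTensor_tmul, aux_auxPTail_tmul,
        TensorProduct.map_tmul, aux_antipode_comul_apply]
      generalize Coalgebra.comul (R := k) x = px
      generalize Coalgebra.comul (R := k) y = py
      induction px using TensorProduct.induction_on with
      | zero => simp only [zero_tmul, tmul_zero, map_zero]
      | add p q hp hq => simp only [add_tmul, tmul_add, map_add, hp, hq]
      | tmul x1 x2 =>
        induction py using TensorProduct.induction_on with
        | zero => simp only [zero_tmul, tmul_zero, map_zero]
        | add p q hp hq => simp only [add_tmul, tmul_add, map_add, hp, hq]
        | tmul y1 y2 =>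
          simp [auxP2, auxPTail]

lemma aux_crux
    (hρ_coassoc : (LinearMap.rTensor H ρ.toLinearMap) ∘ₗ ρ.toLinearMap =
      (TensorProduct.assoc k A H H).symm.toLinearMap ∘ₗ
        (LinearMap.lTensor A Coalgebra.comul) ∘ₗ ρ.toLinearMap)
    (hlco_coassoc : (LinearMap.lTensor H lco.toLinearMap) ∘ₗ lco.toLinearMap =
      (TensorProduct.assoc k H H A).toLinearMap ∘ₗ
        (LinearMap.rTensor A Coalgebra.comul) ∘ₗ lco.toLinearMap)
    (hcommute : (TensorProduct.assoc k H A H).toLinearMap ∘ₗ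
        (LinearMap.rTensor H lco.toLinearMap) ∘ₗ ρ.toLinearMap =
      (LinearMap.lTensor H ρ.toLinearMap) ∘ₗ lco.toLinearMap)
    (a : A) :
    auxInner k H A ρ lco (deltaS k H A ρ lco a) =
      auxOuter k H A (deltaS k H A ρ lco a) := by
  have h1 := aux_L1 k H A ρ lco (auxE k H A ρ lco a)
  have h2 := aux_N1 k H A ρ lco hρ_coassoc hlco_coassoc hcommute a
  have h3 := aux_L2 k H A (auxE k H A ρ lco a)
  rw [show deltaS k H A ρ lco a = auxPTail k H A (auxE k H A ρ lco a) from rfl]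
  simp only [auxInner, auxOuter, LinearMap.comp_apply, LinearEquiv.coe_coe]
  rw [h1, h2, h3]

lemma aux_part_i
    (hρ_coassoc : (LinearMap.rTensor H ρ.toLinearMap) ∘ₗ ρ.toLinearMap =
      (TensorProduct.assoc k A H H).symm.toLinearMap ∘ₗ
        (LinearMap.lTensor A Coalgebra.comul) ∘ₗ ρ.toLinearMap)
    (hlco_coassoc : (LinearMap.lTensor H lco.toLinearMap) ∘ₗ lco.toLinearMap =
      (TensorProduct.assoc k H H A).toLinearMap ∘ₗ
        (LinearMap.rTensor A Coalgebra.comul) ∘ₗ lco.toLinearMap)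
    (hcommute : (TensorProduct.assoc k H A H).toLinearMap ∘ₗ
        (LinearMap.rTensor H lco.toLinearMap) ∘ₗ ρ.toLinearMap =
      (LinearMap.lTensor H ρ.toLinearMap) ∘ₗ lco.toLinearMap)
    {W : Type} [AddCommGroup W] [Module k W] (ν : A →ₗ[k] W →ₗ[k] W) (a : A) :
    Mmap k H W ∘ₗ liftAct k H A ρ lco (H →ₗ[k] W) (liftAct k H A ρ lco W ν) a =
      liftAct k H A ρ lco W ν a ∘ₗ Mmap k H W := by
  apply LinearMap.ext
  intro Φ
  have e1 : liftAct k H A ρ lco (H →ₗ[k] W) (liftAct k H A ρ lco W ν) a =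
      auxAct k H A (liftAct k H A ρ lco W ν) (deltaS k H A ρ lco a) := rfl
  have e2 : liftAct k H A ρ lco W ν a = auxAct k H A ν (deltaS k H A ρ lco a) := rfl
  simp only [LinearMap.comp_apply, e1, e2]
  rw [aux_CLHS k H A ρ lco ν (deltaS k H A ρ lco a) Φ,
    aux_crux k H A ρ lco hρ_coassoc hlco_coassoc hcommute a,
    ← aux_CRHS k H A ν (deltaS k H A ρ lco a) Φ]

end Crux

end Aux

variable (N : Type) [AddCommGroup N] [Module k N] [Module A N]
  [IsScalarTower k A N] [SMulCommClass k A N]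

theorem stmt9
    (hρ_coassoc : (LinearMap.rTensor H ρ.toLinearMap) ∘ₗ ρ.toLinearMap =
      (TensorProduct.assoc k A H H).symm.toLinearMap ∘ₗ
        (LinearMap.lTensor A Coalgebra.comul) ∘ₗ ρ.toLinearMap)
    (hρ_counit : (TensorProduct.rid k A).toLinearMap ∘ₗ
        (LinearMap.lTensor A Coalgebra.counit) ∘ₗ ρ.toLinearMap = LinearMap.id)
    (hlco_coassoc : (LinearMap.lTensor H lco.toLinearMap) ∘ₗ lco.toLinearMap =
      (TensorProduct.assoc k H H A).toLinearMap ∘ₗ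
        (LinearMap.rTensor A Coalgebra.comul) ∘ₗ lco.toLinearMap)
    (hlco_counit : (TensorProduct.lid k A).toLinearMap ∘ₗ
        (LinearMap.rTensor A Coalgebra.counit) ∘ₗ lco.toLinearMap = LinearMap.id)
    (hcommute : (TensorProduct.assoc k H A H).toLinearMap ∘ₗ
        (LinearMap.rTensor H lco.toLinearMap) ∘ₗ ρ.toLinearMap =
      (LinearMap.lTensor H ρ.toLinearMap) ∘ₗ lco.toLinearMap) :
    -- (i) `m` is `A`-linear, where `Hom_k(H, N)` carries `liftAct (csmul)` and
    -- `Hom_k(H, Hom_k(H, N))` carries the same construction applied to that `A`-module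
    (∀ a : A,
      Mmap k H N ∘ₗ
          liftAct k H A ρ lco (H →ₗ[k] N) (liftAct k H A ρ lco N (csmul k A N)) a =
        liftAct k H A ρ lco N (csmul k A N) a ∘ₗ Mmap k H N)
    -- (ii) the unit laws
    ∧ (∀ φ : H →ₗ[k] N, Mmap k H N (unitMap k H (H →ₗ[k] N) φ) = φ)
    ∧ (∀ φ : H →ₗ[k] N, Mmap k H N (unitMap k H N ∘ₗ φ) = φ)
    -- (iii) associativity of `m`
    ∧ (∀ Ψ : H →ₗ[k] (H →ₗ[k] (H →ₗ[k] N)),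
        Mmap k H N (Mmap k H N ∘ₗ Ψ) = Mmap k H N (Mmap k H (H →ₗ[k] N) Ψ)) := by
  exact ⟨fun a => aux_part_i k H A ρ lco hρ_coassoc hlco_coassoc hcommute (csmul k A N) a,
    fun φ => aux_unit_law1 k H φ, fun φ => aux_unit_law2 k H φ,
    fun Ψ => aux_Mmap_assoc k H Ψ⟩

end
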